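/- Let U be an n×n unitary complex matrix whose spectrum contains at most two distinct elements. Then there exist real numbers α, β ∈ (−π, π] and an n×n Hermitian unitary matrix M such that U = exp(i(α+β)/2)·( cos((α−β)/2)·I + i·sin((α−β)/2)·M ). -/

import Mathlib

open Matrix Real
open scoped Matrix.Norms.L2Operator

private theorem quad_eq' (n : ℕ) (U : Matrix (Fin n) (Fin n) ℂ)
    (hU : U ∈ Matrix.unitaryGroup (Fin n) ℂ)
    (s t : ℂ) (hs : spectrum ℂ U ⊆ {s, t}) : (U - s • 1) * (U - t • 1) = 0 := by
  set φ := Matrix.toEuclideanCLM (𝕜 := ℂ) (n := Fin n) with hφ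
  set T := φ U with hT
  have hmem := Unitary.mem_iff.mp hU
  have hnorm : IsStarNormal T := by
    constructor
    show Commute (star (φ U)) (φ U)
    rw [← map_star φ U]
    show φ (star U) * φ U = φ U * φ (star U)
    rw [← _root_.map_mul, ← _root_.map_mul, hmem.1, hmem.2]
  have hspecT : spectrum ℂ T ⊆ {s, t} := by
    rwa [hT, hφ, AlgEquiv.spectrum_eq]
  have key : cfc (fun z => (z - s) * (z - t)) T = 0 := by
    have : cfc (fun z => (z - s) * (z - t)) T = cfc (fun _ : ℂ => (0:ℂ)) T := by
      apply cfc_congr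
      intro x hx
      rcases hspecT hx with h | h <;> simp_all
    rw [this, cfc_const_zero]
  have key2 : (T - s • 1) * (T - t • 1) = 0 := by
    rw [← key]
    rw [cfc_mul _ _ T (by fun_prop) (by fun_prop)]
    rw [cfc_sub _ _ T (by fun_prop) (by fun_prop), cfc_sub _ _ T (by fun_prop) (by fun_prop)]
    rw [cfc_id' ℂ T, cfc_const s T, cfc_const t T]
    simp [smul_eq_mul, Algebra.algebraMap_eq_smul_one]
  have h3 : φ ((U - s • 1) * (U - t • 1)) = φ 0 := by
    rw [map_zero, _root_.map_mul, map_sub, map_sub, _root_.map_smul φ, _root_.map_smul φ]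
    rw [show φ 1 = 1 from _root_.map_one φ]
    exact key2
  exact φ.injective h3

private theorem sing_eq' (n : ℕ) (U : Matrix (Fin n) (Fin n) ℂ)
    (hU : U ∈ Matrix.unitaryGroup (Fin n) ℂ)
    (s : ℂ) (hs : spectrum ℂ U ⊆ {s}) : U = s • 1 := by
  set φ := Matrix.toEuclideanCLM (𝕜 := ℂ) (n := Fin n) with hφ
  set T := φ U with hT
  have hmem := Unitary.mem_iff.mp hU
  have hnorm : IsStarNormal T := by
    constructor
    show Commute (star (φ U)) (φ U)
    rw [← map_star φ U]
    show φ (star U) * φ U = φ U * φ (star U)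
    rw [← _root_.map_mul, ← _root_.map_mul, hmem.1, hmem.2]
  have hspecT : spectrum ℂ T ⊆ {s} := by
    rwa [hT, hφ, AlgEquiv.spectrum_eq]
  have key : cfc (fun z : ℂ => z - s) T = 0 := by
    have : cfc (fun z : ℂ => z - s) T = cfc (fun _ : ℂ => (0:ℂ)) T := by
      apply cfc_congr
      intro x hx
      have := hspecT hx
      simp_all
    rw [this, cfc_const_zero]
  have key2 : T - s • 1 = 0 := by
    rw [← key]
    rw [cfc_sub _ _ T (by fun_prop) (by fun_prop)]
    rw [cfc_id' ℂ T, cfc_const s T]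
    simp [Algebra.algebraMap_eq_smul_one]
  have h3 : φ (U - s • 1) = φ 0 := by
    rw [map_zero, map_sub, _root_.map_smul φ]
    rw [show φ 1 = 1 from _root_.map_one φ]
    exact key2
  have := φ.injective h3
  rwa [sub_eq_zero] at this

set_option maxHeartbeats 1000000 in
theorem stmt_2 (n : ℕ) (U : Matrix (Fin n) (Fin n) ℂ)
    (hU : U ∈ Matrix.unitaryGroup (Fin n) ℂ)
    (hspec : ∃ s t : ℂ, spectrum ℂ U ⊆ {s, t}) :
    ∃ α β : ℝ, α ∈ Set.Ioc (-π) π ∧ β ∈ Set.Ioc (-π) π ∧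
      ∃ M : Matrix (Fin n) (Fin n) ℂ, M.IsHermitian ∧ M ∈ Matrix.unitaryGroup (Fin n) ℂ ∧
        U = Complex.exp (Complex.I * ((α + β) / 2)) •
          ((Real.cos ((α - β) / 2) : ℂ) • (1 : Matrix (Fin n) (Fin n) ℂ) +
            (Complex.I * (Real.sin ((α - β) / 2) : ℂ)) • M) := by
  obtain ⟨s, t, hst⟩ := hspec
  have hmem := Unitary.mem_iff.mp hU
  rcases Nat.eq_zero_or_pos n with hn | hn
  · subst hn
    have hsub : Subsingleton (Matrix (Fin 0) (Fin 0) ℂ) := by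
      constructor; intro a b; ext i; exact absurd i.2 (by omega)
    refine ⟨π, π, ⟨by linarith [Real.pi_pos], le_refl _⟩, ⟨by linarith [Real.pi_pos], le_refl _⟩,
      1, Matrix.isHermitian_one, one_mem _, Subsingleton.elim _ _⟩
  · have hne : Nonempty (Fin n) := ⟨⟨0, hn⟩⟩
    obtain ⟨s₀, hs₀⟩ := spectrum.nonempty U
    have habs : ∀ x ∈ spectrum ℂ U, ‖x‖ = 1 := by
      intro x hx
      have := spectrum.subset_circle_of_unitary hU hx
      simpa using this
    have hexp_arg : ∀ x : ℂ, ‖x‖ = 1 → Complex.exp (Complex.I * x.arg) = x := by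
      intro x hx
      rw [mul_comm]
      have := Complex.norm_mul_exp_arg_mul_I x
      rwa [hx, Complex.ofReal_one, one_mul] at this
    by_cases hsing : spectrum ℂ U ⊆ {s₀}
    · -- singleton case
      have hUeq : U = s₀ • 1 := sing_eq' n U hU s₀ hsing
      set α := s₀.arg with hαdef
      refine ⟨α, α, Complex.arg_mem_Ioc s₀, Complex.arg_mem_Ioc s₀, 1,
        Matrix.isHermitian_one, one_mem _, ?_⟩
      have h1 : ((α : ℂ) + α) / 2 = (α : ℂ) := by ring
      have h2 : ((α : ℝ) - α) / 2 = 0 := by ring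
      rw [h1, h2, Real.cos_zero, Real.sin_zero, hexp_arg s₀ (habs s₀ hs₀)]
      simp [hUeq]
    · -- two point case
      obtain ⟨t₀, ht₀, ht₀ne⟩ : ∃ t₀ ∈ spectrum ℂ U, t₀ ≠ s₀ := by
        rw [Set.not_subset] at hsing
        obtain ⟨x, hx, hxne⟩ := hsing
        exact ⟨x, hx, by simpa using hxne⟩
      have hsub2 : spectrum ℂ U ⊆ {s₀, t₀} := by
        intro x hx
        rcases hst hx with rfl | rfl <;> rcases hst hs₀ with h1 | h1 <;>
          rcases hst ht₀ with h2 | h2 <;> simp_all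
      set α := s₀.arg with hαdef
      set β := t₀.arg with hβdef
      have hαI := Complex.arg_mem_Ioc s₀
      have hβI := Complex.arg_mem_Ioc t₀
      have hs₀exp : Complex.exp (Complex.I * α) = s₀ := hexp_arg s₀ (habs s₀ hs₀)
      have ht₀exp : Complex.exp (Complex.I * β) = t₀ := hexp_arg t₀ (habs t₀ ht₀)
      set θ : ℝ := (α + β) / 2 with hθdef
      set ψ : ℝ := (α - β) / 2 with hψdef
      set F : ℂ := Complex.exp (Complex.I * θ) with hFdef
      set E : ℂ := Complex.exp (Complex.I * ψ) with hEdef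
      have hF : F ≠ 0 := Complex.exp_ne_zero _
      have hE : E ≠ 0 := Complex.exp_ne_zero _
      have hsFE : s₀ = F * E := by
        rw [hFdef, hEdef, ← Complex.exp_add, ← hs₀exp]
        congr 1
        push_cast [hθdef, hψdef]
        ring
      have htFE : t₀ = F * E⁻¹ := by
        rw [hFdef, hEdef, ← Complex.exp_neg, ← Complex.exp_add, ← ht₀exp]
        congr 1
        push_cast [hθdef, hψdef]
        ring
      have hαβ : α ≠ β := by
        intro h
        apply ht₀ne
        rw [← hs₀exp, ← ht₀exp, h]
      have hsinψ : Real.sin ψ ≠ 0 := by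
        have h1 : -π < ψ := by rw [hψdef]; cases hαI; cases hβI; linarith
        have h2 : ψ < π := by rw [hψdef]; cases hαI; cases hβI; linarith
        intro h
        rw [Real.sin_eq_zero_iff_of_lt_of_lt h1 h2] at h
        apply hαβ
        rw [hψdef] at h
        linarith
      set c : ℂ := Complex.I * (Real.sin ψ : ℂ) with hcdef
      have hc : c ≠ 0 := mul_ne_zero Complex.I_ne_zero (by exact_mod_cast hsinψ)
      have hcos : (Real.cos ψ : ℂ) = (E + E⁻¹) / 2 := by
        rw [Complex.ofReal_cos, Complex.cos, hEdef, ← Complex.exp_neg]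
        congr 2 <;> ring_nf
      have hIsin : c = (E - E⁻¹) / 2 := by
        rw [hcdef, Complex.ofReal_sin, Complex.sin, hEdef, ← Complex.exp_neg]
        have hI := Complex.I_sq
        field_simp
        ring_nf
        rw [Complex.I_sq]
        ring_nf
      have hEE : E - E⁻¹ ≠ 0 := by
        intro h
        apply hc
        rw [hIsin, h, zero_div]
      -- key quadratic identity
      have quad := quad_eq' n U hU s₀ t₀ hsub2
      have h1 : U * U = (s₀ + t₀) • U - (s₀ * t₀) • 1 := by
        have expand : (U - s₀ • 1) * (U - t₀ • 1)
            = U * U - ((s₀ + t₀) • U - (s₀ * t₀) • (1 : Matrix (Fin n) (Fin n) ℂ)) := by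
          simp only [sub_mul, mul_sub, smul_mul_assoc, mul_smul_comm, one_mul, mul_one, smul_smul]
          module
        rw [expand] at quad
        exact (sub_eq_zero.mp quad)
      have hstu : s₀ * t₀ ≠ 0 := by
        rw [hsFE, htFE]
        exact mul_ne_zero (mul_ne_zero hF hE) (mul_ne_zero hF (inv_ne_zero hE))
      have h2 : star U = (s₀ * t₀)⁻¹ • ((s₀ + t₀) • (1 : Matrix (Fin n) (Fin n) ℂ) - U) := by
        have e1 := congrArg (· * star U) h1
        simp only [mul_assoc, hmem.2, mul_one, sub_mul, smul_mul_assoc, one_mul] at e1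
        -- e1 : U = (s₀+t₀) • 1 - (s₀*t₀) • star U
        have e2 : (s₀ + t₀) • (1 : Matrix (Fin n) (Fin n) ℂ) - U = (s₀ * t₀) • star U := by
          conv_lhs => rw [e1]
          abel
        rw [e2, smul_smul, inv_mul_cancel₀ hstu, one_smul]
      set M : Matrix (Fin n) (Fin n) ℂ :=
        c⁻¹ • (Complex.exp (-(Complex.I * θ)) • U - (Real.cos ψ : ℂ) • 1) with hM
      have hexpneg : Complex.exp (-(Complex.I * θ)) = F⁻¹ := by
        rw [Complex.exp_neg, hFdef]
      have hcM : c • M = F⁻¹ • U - (Real.cos ψ : ℂ) • 1 := by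
        rw [hM, smul_smul, mul_inv_cancel₀ hc, one_smul, hexpneg]
      -- Hermitian
      have hsc : star c = -c := by
        rw [hcdef]
        simp only [Complex.star_def, _root_.map_mul, Complex.conj_I, Complex.conj_ofReal]
        ring
      have hsF0 : star F = F⁻¹ := by
        rw [hFdef, Complex.star_def, ← Complex.exp_conj, ← Complex.exp_neg]
        congr 1
        simp only [_root_.map_mul, Complex.conj_I, Complex.conj_ofReal]
        ring
      have hsF : star F⁻¹ = F := by rw [star_inv₀, hsF0, inv_inv]
      have hscos : star ((Real.cos ψ : ℂ)) = (Real.cos ψ : ℂ) := by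
        rw [Complex.star_def]; exact Complex.conj_ofReal _
      have hstarM : star M = M := by
        apply smul_right_injective _ hc
        show c • star M = c • M
        have hsA : star (Complex.exp (-(Complex.I * (θ:ℂ))) • U - (Real.cos ψ : ℂ) • 1)
            = F • star U - (Real.cos ψ : ℂ) • (1 : Matrix (Fin n) (Fin n) ℂ) := by
          rw [star_sub, star_smul, star_smul, star_one, hexpneg, hsF, hscos]
        have hsM : star M = (-c)⁻¹ • (F • star U - (Real.cos ψ : ℂ) • 1) := by
          rw [hM, star_smul, star_inv₀, hsc, hsA]
        have hprod : s₀ * t₀ = F * F := by rw [hsFE, htFE]; field_simp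
        have hsum : s₀ + t₀ = (E + E⁻¹) * F := by rw [hsFE, htFE]; ring
        rw [hsM, hcM, smul_smul, show c * (-c)⁻¹ = -1 by field_simp, h2]
        rw [hprod, hsum, hcos]
        match_scalars <;> field_simp [hE, hF] <;> ring
      have hherm : M.IsHermitian := hstarM
      -- unitary
      have hMM : M * M = 1 := by
        apply smul_right_injective _ hc
        apply smul_right_injective _ hc
        show c • c • (M * M) = c • c • (1 : Matrix (Fin n) (Fin n) ℂ)
        have e : (c • M) * (c • M) = c • c • (M * M) := by
          rw [smul_mul_assoc, mul_smul_comm]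
        have hprod : s₀ * t₀ = F * F := by rw [hsFE, htFE]; field_simp
        have hsum : s₀ + t₀ = (E + E⁻¹) * F := by rw [hsFE, htFE]; ring
        rw [← e, hcM]
        simp only [sub_mul, mul_sub, smul_mul_assoc, mul_smul_comm, smul_smul, one_mul, mul_one]
        rw [h1, hprod, hsum, hcos, hIsin]
        match_scalars <;> field_simp [hE, hF] <;> ring
      have hMunit : M ∈ Matrix.unitaryGroup (Fin n) ℂ := by
        rw [Matrix.mem_unitaryGroup_iff]
        rw [hstarM]
        exact hMM
      refine ⟨α, β, hαI, hβI, M, hherm, hMunit, ?_⟩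
      have hπ1 : ((α : ℂ) + β) / 2 = ((θ : ℝ) : ℂ) := by rw [hθdef]; push_cast; ring
      have hπ2 : ((α : ℝ) - β) / 2 = ψ := by rw [hψdef]
      rw [hπ1, hπ2, ← hFdef, ← hcdef, hcM]
      have : (Real.cos ψ : ℂ) • (1 : Matrix (Fin n) (Fin n) ℂ)
          + (F⁻¹ • U - (Real.cos ψ : ℂ) • 1) = F⁻¹ • U := by abel
      rw [this, smul_smul, mul_inv_cancel₀ hF, one_smul]
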